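/- Let $u = u(a)$, $v = u(b)$ be as above with $\theta = \bar a b$, $\theta \ne \pm 1$. Then the intersection $(u\Delta_4 u^*) \cap (v\Delta_4 v^*)$ equals $u\,\{\mathrm{diag}(\mu_1,\mu_2,\mu_3,\mu_2) : \mu_1,\mu_2,\mu_3 \in \mathbb{C}\}\,u^*$, a three-dimensional abelian subalgebra of $M_4(\mathbb{C})$. Equivalently, $\Delta_4 \cap (u^*v)\Delta_4(u^*v)^* = \{\mathrm{diag}(\mu_1,\mu_2,\mu_3,\mu_2)\}$. -/

import Mathlib

open Matrix

noncomputable def Wm (θ : ℂ) : Matrix (Fin 4) (Fin 4) ℂ :=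
  !![1,0,0,0; 0,(1+θ)/2,0,(1-θ)/2; 0,0,1,0; 0,(1-θ)/2,0,(1+θ)/2]

theorem WdW (θ : ℂ) (e : Fin 4 → ℂ) :
    Wm θ * diagonal e * (Wm θ)ᴴ =
    !![e 0, 0, 0, 0;
       0, ((1+θ)*(1+star θ)*e 1 + (1-θ)*(1-star θ)*e 3)/4, 0,
          ((1+θ)*(1-star θ)*e 1 + (1-θ)*(1+star θ)*e 3)/4;
       0, 0, e 2, 0;
       0, ((1-θ)*(1+star θ)*e 1 + (1+θ)*(1-star θ)*e 3)/4, 0,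
          ((1-θ)*(1-star θ)*e 1 + (1+θ)*(1+star θ)*e 3)/4] := by
  ext i j
  fin_cases i <;> fin_cases j <;>
    simp [Wm, Matrix.mul_apply, Fin.sum_univ_four, Matrix.conjTranspose_apply,
      Matrix.diagonal_apply, Matrix.vecMul, dotProduct, Complex.star_def, map_ofNat,
      Matrix.vecHead, Matrix.vecTail]
  all_goals ring

set_option maxHeartbeats 2000000 in
theorem u_unit (a : ℂ) (ha : star a * a = 1) (u : Matrix (Fin 4) (Fin 4) ℂ)
    (hu : u = (1/2 : ℂ) • !![1, 1, 1, 1;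
        1, Complex.I * a, -1, -(Complex.I * a);
        1, -1, 1, -1;
        1, -(Complex.I * a), -1, Complex.I * a]) :
    u * uᴴ = 1 ∧ uᴴ * u = 1 := by
  rw [Complex.star_def] at ha
  subst hu
  constructor <;>
    · ext i j
      fin_cases i <;> fin_cases j <;>
        simp [Matrix.mul_apply, Fin.sum_univ_four, Matrix.conjTranspose_apply,
          Matrix.one_apply, Complex.star_def, _root_.map_mul, Complex.conj_I, map_ofNat,
          Matrix.vecHead, Matrix.vecTail]
      all_goals ring_nf
      all_goals try rw [show (Complex.I^2 : ℂ) = -1 from Complex.I_sq]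
      all_goals try ring
      all_goals first
        | linear_combination (-(1:ℂ)/2) * ha
        | linear_combination (-(3:ℂ)/2) * ha
        | linear_combination ((1:ℂ)/2) * ha
        | linear_combination ((3:ℂ)/2) * ha
        | linear_combination ha
        | linear_combination -ha

set_option maxHeartbeats 2000000 in
theorem uv_eq (a b : ℂ)
    (u v : Matrix (Fin 4) (Fin 4) ℂ)
    (hu : u = (1/2 : ℂ) • !![1, 1, 1, 1;
        1, Complex.I * a, -1, -(Complex.I * a);
        1, -1, 1, -1;
        1, -(Complex.I * a), -1, Complex.I * a])
    (hv : v = (1/2 : ℂ) • !![1, 1, 1, 1;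
        1, Complex.I * b, -1, -(Complex.I * b);
        1, -1, 1, -1;
        1, -(Complex.I * b), -1, Complex.I * b]) :
    uᴴ * v = Wm (star a * b) := by
  subst hu hv
  ext i j
  fin_cases i <;> fin_cases j <;>
    simp [Wm, Matrix.mul_apply, Fin.sum_univ_four, Matrix.conjTranspose_apply,
        Complex.star_def, _root_.map_mul, Complex.conj_I, map_ofNat,
        Matrix.vecHead, Matrix.vecTail]
  all_goals ring_nf
  all_goals try rw [show (Complex.I^2 : ℂ) = -1 from Complex.I_sq]
  all_goals ring

theorem key2 (θ : ℂ) (h1 : θ * star θ = 1) (hne : θ - star θ ≠ 0) :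
    ({A : Matrix (Fin 4) (Fin 4) ℂ | ∃ d : Fin 4 → ℂ, A = Matrix.diagonal d} ∩
        {A : Matrix (Fin 4) (Fin 4) ℂ | ∃ d : Fin 4 → ℂ,
          A = Wm θ * Matrix.diagonal d * (Wm θ)ᴴ}
      = {A : Matrix (Fin 4) (Fin 4) ℂ | ∃ μ₁ μ₂ μ₃ : ℂ,
          A = Matrix.diagonal (![μ₁, μ₂, μ₃, μ₂] : Fin 4 → ℂ)}) := by
  ext A
  simp only [Set.mem_inter_iff, Set.mem_setOf_eq]
  constructor
  · rintro ⟨⟨d, rfl⟩, e, he⟩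
    rw [WdW] at he
    have h13 := congrFun (congrFun he 1) 3
    have h11 := congrFun (congrFun he 1) 1
    have h33 := congrFun (congrFun he 3) 3
    simp only [Complex.star_def] at h1 hne
    simp [Matrix.diagonal_apply, Complex.star_def] at h13 h11 h33
    have he13 : e 1 = e 3 := by
      have h4 : (θ - (starRingEnd ℂ) θ) * (e 1 - e 3) = 0 := by
        linear_combination (-4:ℂ) * h13 + (e 1 + e 3) * h1
      rcases mul_eq_zero.1 h4 with h | h
      · exact absurd h hne
      · exact sub_eq_zero.1 h
    refine ⟨d 0, d 1, d 2, ?_⟩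
    have h31 : d 3 = d 1 := by
      linear_combination h33 - h11 - ((θ + (starRingEnd ℂ) θ)/2) * he13
    have hd : d = ![d 0, d 1, d 2, d 1] := by
      funext i; fin_cases i <;> simp [h31]
    conv_lhs => rw [hd]
  · rintro ⟨μ₁, μ₂, μ₃, rfl⟩
    refine ⟨⟨_, rfl⟩, ![μ₁, μ₂, μ₃, μ₂], ?_⟩
    rw [WdW]
    simp only [Complex.star_def] at h1
    ext i j
    fin_cases i <;> fin_cases j <;>
      simp [Matrix.diagonal_apply, Matrix.vecHead, Matrix.vecTail, Complex.star_def]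
    all_goals first
      | linear_combination (μ₂/2) * h1
      | linear_combination (-(μ₂)/2) * h1
      | linear_combination (μ₂/4) * h1
      | linear_combination (-(μ₂)/4) * h1
      | linear_combination μ₂ * h1
      | linear_combination (-μ₂) * h1

/-- For the inequivalent `4×4` Hadamard matrices `u = u(a)`, `v = u(b)` with
`θ = ā b ≠ ±1`: `(uΔ₄u*) ∩ (vΔ₄v*) = u {diag(μ₁,μ₂,μ₃,μ₂)} u*`; equivalently
`Δ₄ ∩ (u*v)Δ₄(u*v)* = {diag(μ₁,μ₂,μ₃,μ₂)}`. -/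
theorem stmt15 (a b : ℂ) (ha : ‖a‖ = 1) (hb : ‖b‖ = 1)
    (hθ1 : star a * b ≠ 1) (hθ2 : star a * b ≠ -1)
    (u v : Matrix (Fin 4) (Fin 4) ℂ)
    (hu : u = (1/2 : ℂ) • !![1, 1, 1, 1;
        1, Complex.I * a, -1, -(Complex.I * a);
        1, -1, 1, -1;
        1, -(Complex.I * a), -1, Complex.I * a])
    (hv : v = (1/2 : ℂ) • !![1, 1, 1, 1;
        1, Complex.I * b, -1, -(Complex.I * b);
        1, -1, 1, -1;
        1, -(Complex.I * b), -1, Complex.I * b]) :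
    ({A : Matrix (Fin 4) (Fin 4) ℂ | ∃ d : Fin 4 → ℂ, A = u * Matrix.diagonal d * uᴴ} ∩
        {A : Matrix (Fin 4) (Fin 4) ℂ | ∃ d : Fin 4 → ℂ, A = v * Matrix.diagonal d * vᴴ}
      = {A : Matrix (Fin 4) (Fin 4) ℂ | ∃ μ₁ μ₂ μ₃ : ℂ,
          A = u * Matrix.diagonal (![μ₁, μ₂, μ₃, μ₂] : Fin 4 → ℂ) * uᴴ}) ∧
    ({A : Matrix (Fin 4) (Fin 4) ℂ | ∃ d : Fin 4 → ℂ, A = Matrix.diagonal d} ∩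
        {A : Matrix (Fin 4) (Fin 4) ℂ | ∃ d : Fin 4 → ℂ,
          A = (uᴴ * v) * Matrix.diagonal d * (uᴴ * v)ᴴ}
      = {A : Matrix (Fin 4) (Fin 4) ℂ | ∃ μ₁ μ₂ μ₃ : ℂ,
          A = Matrix.diagonal (![μ₁, μ₂, μ₃, μ₂] : Fin 4 → ℂ)}) := by
  -- basic facts about θ
  set θ := star a * b with hθ
  have ha1 : star a * a = 1 := by
    rw [Complex.star_def, ← Complex.normSq_eq_conj_mul_self, Complex.normSq_eq_norm_sq, ha]; norm_num
  have hb1 : star b * b = 1 := by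
    rw [Complex.star_def, ← Complex.normSq_eq_conj_mul_self, Complex.normSq_eq_norm_sq, hb]; norm_num
  have h1 : θ * star θ = 1 := by
    have : θ * star θ = (star a * a) * (star b * b) := by
      simp [hθ, star_mul', mul_comm, mul_assoc, mul_left_comm]
    rw [this, ha1, hb1, mul_one]
  have hne : θ - star θ ≠ 0 := by
    intro h
    have hθθ : star θ = θ := (sub_eq_zero.1 h).symm
    have h2 : (θ - 1) * (θ + 1) = 0 := by
      rw [hθθ] at h1; linear_combination h1
    rcases mul_eq_zero.1 h2 with h' | h'
    · exact hθ1 (sub_eq_zero.1 h')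
    · exact hθ2 (by rwa [add_eq_zero_iff_eq_neg] at h')
  have huv : uᴴ * v = Wm θ := uv_eq a b u v hu hv
  have hkey := key2 θ h1 hne
  have hu2 := u_unit a ha1 u hu
  obtain ⟨huu', huu⟩ := hu2
  constructor
  · ext A
    simp only [Set.mem_inter_iff, Set.mem_setOf_eq]
    constructor
    · rintro ⟨⟨d, rfl⟩, e, he⟩
      have hd : diagonal d = Wm θ * diagonal e * (Wm θ)ᴴ := by
        have h2 : uᴴ * (u * diagonal d * uᴴ) * u = uᴴ * (v * diagonal e * vᴴ) * u := by
          rw [he]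
        calc diagonal d = (uᴴ * u) * diagonal d * (uᴴ * u) := by rw [huu, one_mul, mul_one]
          _ = uᴴ * (u * diagonal d * uᴴ) * u := by
              simp only [Matrix.mul_assoc]
          _ = uᴴ * (v * diagonal e * vᴴ) * u := h2
          _ = (uᴴ * v) * diagonal e * (vᴴ * u) := by simp only [Matrix.mul_assoc]
          _ = Wm θ * diagonal e * (Wm θ)ᴴ := by
              rw [← huv, conjTranspose_mul, conjTranspose_conjTranspose]
      have hmem : diagonal d ∈ ({A : Matrix (Fin 4) (Fin 4) ℂ | ∃ d : Fin 4 → ℂ, A = Matrix.diagonal d} ∩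
          {A : Matrix (Fin 4) (Fin 4) ℂ | ∃ e : Fin 4 → ℂ, A = Wm θ * Matrix.diagonal e * (Wm θ)ᴴ}) :=
        ⟨⟨d, rfl⟩, ⟨e, hd⟩⟩
      rw [hkey] at hmem
      obtain ⟨μ₁, μ₂, μ₃, hμ⟩ := hmem
      exact ⟨μ₁, μ₂, μ₃, by rw [hμ]⟩
    · rintro ⟨μ₁, μ₂, μ₃, rfl⟩
      have hmem : diagonal (![μ₁, μ₂, μ₃, μ₂] : Fin 4 → ℂ) ∈
          ({A : Matrix (Fin 4) (Fin 4) ℂ | ∃ μ₁ μ₂ μ₃ : ℂ,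
            A = Matrix.diagonal (![μ₁, μ₂, μ₃, μ₂] : Fin 4 → ℂ)}) := ⟨μ₁, μ₂, μ₃, rfl⟩
      rw [← hkey] at hmem
      obtain ⟨-, e, hE⟩ := hmem
      rw [← huv] at hE
      refine ⟨⟨_, rfl⟩, e, ?_⟩
      calc u * diagonal (![μ₁, μ₂, μ₃, μ₂] : Fin 4 → ℂ) * uᴴ
          = u * ((uᴴ * v) * diagonal e * (uᴴ * v)ᴴ) * uᴴ := by rw [← hE]
        _ = (u * uᴴ) * (v * diagonal e * vᴴ) * (u * uᴴ) := by
            rw [conjTranspose_mul, conjTranspose_conjTranspose]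
            simp only [Matrix.mul_assoc]
        _ = v * diagonal e * vᴴ := by rw [huu', one_mul, mul_one]
  · rw [huv]; exact hkey
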